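/- Let $\beta_1, \ldots, \beta_k < 0$, $\alpha_n \to \infty$ with $n e^{\alpha_n \beta_1} \to \lambda \in (0, \infty)$. Then $\sum_{j=0}^{n} \binom{n}{j} e^{\alpha_n\beta_1 j + \sum_{p=2}^k \alpha_n \beta_p j^p / n^{p-1}} \to e^{\lambda}$ as $n \to \infty$. -/

import Mathlib

open Real Filter Finset

theorem stmt12 (k : ℕ) (hk : 1 ≤ k) (β : ℕ → ℝ)
    (hβ : ∀ p ∈ Finset.Icc 1 k, β p < 0)
    (α : ℕ → ℝ) (hα : Tendsto α atTop atTop)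
    (lam : ℝ) (hlam : 0 < lam)
    (h : Tendsto (fun n : ℕ => (n : ℝ) * Real.exp (α n * β 1)) atTop (nhds lam)) :
    Tendsto (fun n : ℕ => ∑ j ∈ Finset.range (n + 1), (n.choose j : ℝ) *
        Real.exp (α n * β 1 * j +
          ∑ p ∈ Finset.Icc 2 k, α n * β p * (j : ℝ) ^ p / (n : ℝ) ^ (p - 1)))
      atTop (nhds (Real.exp lam)) := by
  set c : ℕ → ℝ := fun n => Real.exp (α n * β 1) with hc
  have hβ1 : β 1 < 0 := hβ 1 (Finset.mem_Icc.2 ⟨le_rfl, hk⟩)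
  have hc_pos : ∀ n, 0 < c n := fun n => Real.exp_pos _
  -- notation for the extra exponent
  set E : ℕ → ℕ → ℝ := fun n j =>
    ∑ p ∈ Finset.Icc 2 k, α n * β p * (j : ℝ) ^ p / (n : ℝ) ^ (p - 1) with hE
  -- c n → 0
  have hc0 : Tendsto c atTop (nhds 0) := by
    have h1 : Tendsto (fun n : ℕ => ((n : ℝ) * c n) * (1 / (n : ℝ))) atTop
        (nhds (lam * 0)) := h.mul tendsto_one_div_atTop_nhds_zero_nat
    rw [mul_zero] at h1
    refine h1.congr' ?_
    filter_upwards [eventually_ge_atTop 1] with n hn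
    have : (n : ℝ) ≠ 0 := Nat.cast_ne_zero.2 (by omega)
    field_simp
  -- α n / n → 0
  have hαdiv : Tendsto (fun n : ℕ => α n / (n : ℝ)) atTop (nhds 0) := by
    have hlog : Tendsto (fun n : ℕ => Real.log ((n : ℝ) * c n)) atTop
        (nhds (Real.log lam)) := ((Real.continuousAt_log hlam.ne').tendsto).comp h
    have h2 : Tendsto (fun n : ℕ => Real.log n + α n * β 1) atTop (nhds (Real.log lam)) := by
      refine hlog.congr' ?_
      filter_upwards [eventually_ge_atTop 1] with n hn
      have hn0 : (n : ℝ) ≠ 0 := Nat.cast_ne_zero.2 (by omega)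
      rw [Real.log_mul hn0 (hc_pos n).ne', Real.log_exp]
    have h3 : Tendsto (fun n : ℕ => (Real.log n + α n * β 1) / (n : ℝ)) atTop (nhds 0) :=
      h2.div_atTop tendsto_natCast_atTop_atTop
    have h4 : Tendsto (fun n : ℕ => Real.log n / (n : ℝ)) atTop (nhds 0) := by
      have := Real.isLittleO_log_id_atTop.tendsto_div_nhds_zero
      exact (this.comp tendsto_natCast_atTop_atTop)
    have h5 : Tendsto (fun n : ℕ =>
        ((Real.log n + α n * β 1) / (n : ℝ) - Real.log n / (n : ℝ)) / β 1) atTop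
        (nhds ((0 - 0) / β 1)) := (h3.sub h4).div_const _
    rw [sub_zero, zero_div] at h5
    refine h5.congr' ?_
    filter_upwards [eventually_ge_atTop 1] with n hn
    have hn0 : (n : ℝ) ≠ 0 := Nat.cast_ne_zero.2 (by omega)
    have hb : β 1 ≠ 0 := hβ1.ne
    field_simp
    ring
  -- α n / n^(p-1) → 0 for 2 ≤ p
  have hA : ∀ p : ℕ, 2 ≤ p →
      Tendsto (fun n : ℕ => α n / (n : ℝ) ^ (p - 1)) atTop (nhds 0) := by
    intro p hp
    refine tendsto_of_tendsto_of_tendsto_of_le_of_le' tendsto_const_nhds hαdiv ?_ ?_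
    · filter_upwards [hα.eventually_ge_atTop 0] with n hn
      positivity
    · filter_upwards [hα.eventually_ge_atTop 0, eventually_ge_atTop 1] with n hn hn1
      have hn0 : (1 : ℝ) ≤ (n : ℝ) := by exact_mod_cast hn1
      have hpow : (n : ℝ) ≤ (n : ℝ) ^ (p - 1) := by
        calc (n : ℝ) = (n : ℝ) ^ 1 := (pow_one _).symm
        _ ≤ (n : ℝ) ^ (p - 1) := pow_le_pow_right₀ hn0 (by omega)
      exact div_le_div_of_nonneg_left hn (by linarith) hpow
  -- E n j → 0 for each fixed j
  have hElim : ∀ j : ℕ, Tendsto (fun n : ℕ => E n j) atTop (nhds 0) := by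
    intro j
    have : Tendsto (fun n : ℕ => ∑ p ∈ Finset.Icc 2 k,
        (α n / (n : ℝ) ^ (p - 1)) * (β p * (j : ℝ) ^ p)) atTop
        (nhds (∑ p ∈ Finset.Icc 2 k, (0 : ℝ))) := by
      refine tendsto_finset_sum _ (fun p hp => ?_)
      have h2p : 2 ≤ p := (Finset.mem_Icc.1 hp).1
      have := (hA p h2p).mul_const (β p * (j : ℝ) ^ p)
      rwa [zero_mul] at this
    rw [Finset.sum_const_zero] at this
    refine this.congr (fun n => ?_)
    refine Finset.sum_congr rfl (fun p hp => ?_)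
    rw [div_mul_eq_mul_div]
    ring_nf
  -- the choose * c^j limit
  have hterm : ∀ j : ℕ, Tendsto (fun n : ℕ => (n.choose j : ℝ) * c n ^ j) atTop
      (nhds (lam ^ j / j.factorial)) := by
    intro j
    have hprod : Tendsto (fun n : ℕ => ∏ i ∈ Finset.range j, ((n : ℝ) * c n - (i : ℝ) * c n))
        atTop (nhds (∏ i ∈ Finset.range j, lam)) := by
      refine tendsto_finset_prod _ (fun i _ => ?_)
      have := h.sub (hc0.const_mul (i : ℝ))
      rwa [mul_zero, sub_zero] at this
    rw [Finset.prod_const, Finset.card_range] at hprod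
    have := hprod.div_const (j.factorial : ℝ)
    refine this.congr' ?_
    filter_upwards [eventually_ge_atTop j] with n hn
    have hd : ((n.descFactorial j : ℕ) : ℝ) = ∏ i ∈ Finset.range j, ((n : ℝ) - (i : ℝ)) := by
      rw [Nat.descFactorial_eq_prod_range, Nat.cast_prod]
      refine Finset.prod_congr rfl (fun i hi => ?_)
      have : i ≤ n := le_trans (Finset.mem_range.1 hi).le hn
      push_cast [Nat.cast_sub this]
      ring
    have hfac : (j.factorial : ℝ) ≠ 0 := Nat.cast_ne_zero.2 j.factorial_ne_zero
    have hdesc : ((n.descFactorial j : ℕ) : ℝ) = (j.factorial : ℝ) * (n.choose j : ℝ) := by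
      exact_mod_cast congrArg (Nat.cast (R := ℝ)) (Nat.descFactorial_eq_factorial_mul_choose n j)
    have : ∏ i ∈ Finset.range j, ((n : ℝ) * c n - (i : ℝ) * c n)
        = ((n.descFactorial j : ℕ) : ℝ) * c n ^ j := by
      rw [hd]
      calc ∏ i ∈ Finset.range j, ((n : ℝ) * c n - (i : ℝ) * c n)
          = ∏ i ∈ Finset.range j, (((n : ℝ) - (i : ℝ)) * c n) :=
            Finset.prod_congr rfl (fun i _ => by ring)
        _ = (∏ i ∈ Finset.range j, ((n : ℝ) - (i : ℝ))) * c n ^ j := by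
            rw [Finset.prod_mul_distrib, Finset.prod_const, Finset.card_range]
    rw [this, hdesc]
    field_simp
  -- tendsto of each full term (for fixed j)
  have htermfull : ∀ j : ℕ, Tendsto
      (fun n : ℕ => (n.choose j : ℝ) * Real.exp (α n * β 1 * j + E n j)) atTop
      (nhds (lam ^ j / j.factorial)) := by
    intro j
    have hexpE : Tendsto (fun n : ℕ => Real.exp (E n j)) atTop (nhds 1) := by
      have := (Real.continuous_exp.tendsto 0).comp (hElim j)
      rwa [Real.exp_zero] at this
    have := (hterm j).mul hexpE
    rw [mul_one] at this
    refine this.congr (fun n => ?_)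
    rw [Real.exp_add, mul_comm (α n * β 1) (j : ℝ), Real.exp_nat_mul]
    ring
  -- partial-sum lower bounds converge
  have hT : ∀ M : ℕ, Tendsto (fun n : ℕ => ∑ j ∈ Finset.range (M + 1),
      (n.choose j : ℝ) * Real.exp (α n * β 1 * j + E n j)) atTop
      (nhds (∑ j ∈ Finset.range (M + 1), lam ^ j / j.factorial)) :=
    fun M => tendsto_finset_sum _ (fun j _ => htermfull j)
  -- partial sums of exp series tend to exp lam
  have hL : Tendsto (fun M : ℕ => ∑ j ∈ Finset.range (M + 1), lam ^ j / (j.factorial : ℝ))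
      atTop (nhds (Real.exp lam)) := by
    have hs : HasSum (fun j : ℕ => lam ^ j / (j.factorial : ℝ)) (Real.exp lam) := by
      have := NormedSpace.exp_series_hasSum_exp' (𝕂 := ℝ) lam
      rw [Real.exp_eq_exp_ℝ]
      refine this.congr_fun (fun j => ?_)
      rw [smul_eq_mul, div_eq_inv_mul]
    exact hs.tendsto_sum_nat.comp (tendsto_add_atTop_nat 1)
  -- upper bound sequence
  have hU : Tendsto (fun n : ℕ => (c n + 1) ^ n) atTop (nhds (Real.exp lam)) := by
    have hlow : Tendsto (fun n : ℕ => ((n : ℝ) * c n) / (1 + c n)) atTop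
        (nhds (lam / (1 + 0))) := by
      refine h.div (by simpa using tendsto_const_nhds.add hc0) (by norm_num)
    rw [add_zero, div_one] at hlow
    have hmid : Tendsto (fun n : ℕ => (n : ℝ) * Real.log (1 + c n)) atTop (nhds lam) := by
      refine tendsto_of_tendsto_of_tendsto_of_le_of_le' hlow h ?_ ?_
      · filter_upwards with n
        have hc1 : (0 : ℝ) < 1 + c n := by linarith [hc_pos n]
        have hlb : c n / (1 + c n) ≤ Real.log (1 + c n) := by
          have := Real.log_le_sub_one_of_pos (x := (1 + c n)⁻¹) (by positivity)
          rw [Real.log_inv] at this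
          have h2 : 1 - (1 + c n)⁻¹ ≤ Real.log (1 + c n) := by linarith
          have h3 : c n / (1 + c n) = 1 - (1 + c n)⁻¹ := by field_simp; ring
          linarith [h3 ▸ h2]
        calc (n : ℝ) * c n / (1 + c n) = (n : ℝ) * (c n / (1 + c n)) := by ring
        _ ≤ (n : ℝ) * Real.log (1 + c n) := by
            exact mul_le_mul_of_nonneg_left hlb (Nat.cast_nonneg n)
      · filter_upwards with n
        have hub : Real.log (1 + c n) ≤ c n := by
          have := Real.log_le_sub_one_of_pos (x := 1 + c n) (by linarith [hc_pos n])
          linarith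
        exact mul_le_mul_of_nonneg_left hub (Nat.cast_nonneg n)
    have := (Real.continuous_exp.tendsto lam).comp hmid
    refine this.congr' ?_
    filter_upwards with n
    have hc1 : (0 : ℝ) < 1 + c n := by linarith [hc_pos n]
    simp only [Function.comp]
    rw [Real.exp_nat_mul, Real.exp_log hc1, add_comm]
  -- nonnegativity of terms
  have hnonneg : ∀ n j : ℕ, 0 ≤ (n.choose j : ℝ) * Real.exp (α n * β 1 * j + E n j) :=
    fun n j => mul_nonneg (Nat.cast_nonneg _) (Real.exp_pos _).le
  -- final squeeze via the order topology
  rw [tendsto_order]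
  constructor
  · intro a ha
    obtain ⟨M, hM⟩ := (hL.eventually_const_lt ha).exists
    have hTM := (hT M).eventually_const_lt hM
    filter_upwards [hTM, eventually_ge_atTop M] with n hn hnM
    refine lt_of_lt_of_le hn ?_
    refine Finset.sum_le_sum_of_subset_of_nonneg ?_ (fun j _ _ => hnonneg n j)
    exact Finset.range_subset_range.2 (by omega)
  · intro a ha
    have hUa := hU.eventually_lt_const ha
    filter_upwards [hUa, hα.eventually_ge_atTop 0] with n hn hαn
    refine lt_of_le_of_lt ?_ hn
    calc ∑ j ∈ Finset.range (n + 1), (n.choose j : ℝ) * Real.exp (α n * β 1 * j + E n j)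
        ≤ ∑ j ∈ Finset.range (n + 1), (n.choose j : ℝ) * Real.exp (α n * β 1 * j) := by
          refine Finset.sum_le_sum (fun j _ => ?_)
          refine mul_le_mul_of_nonneg_left (Real.exp_le_exp.2 ?_) (Nat.cast_nonneg _)
          have hEneg : E n j ≤ 0 := by
            refine Finset.sum_nonpos (fun p hp => ?_)
            have hβp : β p < 0 := hβ p (Finset.mem_Icc.2
              ⟨le_trans (by norm_num) (Finset.mem_Icc.1 hp).1, (Finset.mem_Icc.1 hp).2⟩)
            refine div_nonpos_of_nonpos_of_nonneg ?_ (by positivity)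
            have : (0 : ℝ) ≤ α n * (j : ℝ) ^ p := by positivity
            nlinarith
          linarith
      _ = (c n + 1) ^ n := by
          rw [add_pow]
          refine Finset.sum_congr rfl (fun j hj => ?_)
          rw [mul_comm (α n * β 1) (j : ℝ), Real.exp_nat_mul, one_pow]
          ring
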